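/- Let B, G, R be pairwise disjoint finite subsets of an irreducible plane cubic curve c (with its abelian group structure in which three points sum to zero iff they are collinear), with |B| = |G| = n, B ∪ G in general position, |R| < (3/2)n, and such that every line through a point of B and a point of G passes through a point of R. Then there is a subgroup H of c with |H| ≤ |R| such that B and G are each contained in a coset of H. -/

import Mathlib

open Pointwise Finset

/-- Overlap lemma: any two translates `b+G`, `b'+G` lie in `S` of size `< 3n/2`,
so they overlap in more than `n/2` points, giving a large transporter set. -/
private lemma aux_transport {F : Type*} [AddCommGroup F] [DecidableEq F] (n : ℕ)
    (Bf Gf Sf : Finset F) (hG : Gf.card = n) (hS : 2 * Sf.card < 3 * n)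
    (hsub : ∀ b ∈ Bf, ∀ g ∈ Gf, b + g ∈ Sf) :
    ∀ b ∈ Bf, ∀ b' ∈ Bf, n < 2 * (Gf.filter (fun γ => γ + (b' - b) ∈ Gf)).card := by
  intro b hb b' hb'
  set T1 := Gf.image (fun γ => b + γ) with hT1def
  set T2 := Gf.image (fun γ => b' + γ) with hT2def
  have hT1 : T1.card = n := by
    rw [hT1def, card_image_of_injective _ (add_right_injective b), hG]
  have hT2 : T2.card = n := by
    rw [hT2def, card_image_of_injective _ (add_right_injective b'), hG]
  have hUS : T1 ∪ T2 ⊆ Sf := by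
    intro x hx
    rcases mem_union.1 hx with h | h
    · obtain ⟨γ, hγ, rfl⟩ := mem_image.1 h
      exact hsub b hb γ hγ
    · obtain ⟨γ, hγ, rfl⟩ := mem_image.1 h
      exact hsub b' hb' γ hγ
  have hcard : (T1 ∪ T2).card + (T1 ∩ T2).card = n + n := by
    rw [card_union_add_card_inter, hT1, hT2]
  have hle : (T1 ∪ T2).card ≤ Sf.card := card_le_card hUS
  have hmap : (T1 ∩ T2).card ≤ (Gf.filter (fun γ => γ + (b' - b) ∈ Gf)).card := by
    apply card_le_card_of_injOn (fun x => x - b')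
    · intro x hx
      obtain ⟨hx1, hx2⟩ := mem_inter.1 hx
      obtain ⟨γ', hγ', hxe⟩ := mem_image.1 hx1
      obtain ⟨γ, hγ, hxe'⟩ := mem_image.1 hx2
      refine mem_filter.2 ⟨?_, ?_⟩
      · rw [← hxe']; simpa using hγ
      · have h1 : x - b' + (b' - b) = γ' := by rw [← hxe]; abel
        rw [h1]; exact hγ'
    · intro x _ y _ h
      simpa using congrArg (fun z => z + b') h
  omega

/-- Two subsets of `Gf` (of size `n`) each of size `> n/2` intersect. -/
private lemma aux_inter {F : Type*} [DecidableEq F] (n : ℕ) (Gf : Finset F)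
    (hG : Gf.card = n) (W1 W2 : Finset F) (h1 : W1 ⊆ Gf) (h2 : W2 ⊆ Gf)
    (hc1 : n < 2 * W1.card) (hc2 : n < 2 * W2.card) : (W1 ∩ W2).Nonempty := by
  rw [← card_pos]
  have h := card_union_add_card_inter W1 W2
  have hle : (W1 ∪ W2).card ≤ n := hG ▸ card_le_card (union_subset h1 h2)
  omega

theorem stmt_8 {F : Type*} [AddCommGroup F] (n : ℕ) (B G R : Set F)
    (hfinB : B.Finite) (hfinG : G.Finite) (hfinR : R.Finite)
    (hBG : Disjoint B G) (hBR : Disjoint B R) (hGR : Disjoint G R)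
    (hB : B.ncard = n) (hG : G.ncard = n)
    (hR : 2 * R.ncard < 3 * n)
    (hpierce : ∀ b ∈ B, ∀ g ∈ G, ∃ r ∈ R, b + g + r = 0) :
    ∃ H : AddSubgroup F, (H : Set F).ncard ≤ R.ncard ∧
      (∃ a : F, B ⊆ {a} + (H : Set F)) ∧ (∃ a : F, G ⊆ {a} + (H : Set F)) := by
  classical
  have hn : 0 < n := by omega
  set Bf := hfinB.toFinset with hBfdef
  set Gf := hfinG.toFinset with hGfdef
  set Rf := hfinR.toFinset with hRfdef
  have hBc : Bf.card = n := by rw [← Set.ncard_eq_toFinset_card B hfinB]; exact hB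
  have hGc : Gf.card = n := by rw [← Set.ncard_eq_toFinset_card G hfinG]; exact hG
  have hRc : Rf.card = R.ncard := (Set.ncard_eq_toFinset_card R hfinR).symm
  set Sf := Bf + Gf with hSfdef
  have hmemS : ∀ b ∈ Bf, ∀ g ∈ Gf, b + g ∈ Sf := fun b hb g hg => add_mem_add hb hg
  have hSR : Sf.card ≤ R.ncard := by
    rw [← hRc]
    apply card_le_card_of_injOn (fun s => -s)
    · intro s hs
      obtain ⟨b, hb, g, hg, rfl⟩ := mem_add.1 hs
      obtain ⟨r, hr, hr0⟩ := hpierce b (hfinB.mem_toFinset.1 hb) g (hfinG.mem_toFinset.1 hg)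
      have h1 : -(b + g) = r := add_eq_zero_iff_neg_eq.1 hr0
      rw [show (fun s : F => -s) (b + g) = r from h1]
      exact hfinR.mem_toFinset.2 hr
    · intro x _ y _ h
      exact neg_injective h
  have hS3 : 2 * Sf.card < 3 * n := by omega
  -- transporter lemmas
  have keyG := aux_transport n Bf Gf Sf hGc hS3 hmemS
  have keyB : ∀ g ∈ Gf, ∀ g' ∈ Gf, n < 2 * (Bf.filter (fun c => c + (g' - g) ∈ Bf)).card := by
    apply aux_transport n Gf Bf Sf hBc hS3
    intro g hg b hb
    rw [add_comm]
    exact hmemS b hb g hg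
  -- difference sets
  set Df := Finset.image₂ (fun b' b => b' - b) Bf Bf with hDfdef
  set Ef := Finset.image₂ (fun g' g => g' - g) Gf Gf with hEfdef
  have hmemD : ∀ d ∈ Df, n < 2 * (Gf.filter (fun γ => γ + d ∈ Gf)).card := by
    intro d hd
    obtain ⟨b', hb', b, hb, rfl⟩ := Finset.mem_image₂.1 hd
    exact keyG b hb b' hb'
  have hmemE : ∀ e ∈ Ef, n < 2 * (Bf.filter (fun c => c + e ∈ Bf)).card := by
    intro e he
    obtain ⟨g', hg', g, hg, rfl⟩ := Finset.mem_image₂.1 he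
    exact keyB g hg g' hg'
  have hDE : ∀ d1 ∈ Df, ∀ d2 ∈ Df, d1 - d2 ∈ Ef := by
    intro d1 h1 d2 h2
    obtain ⟨γ, hγ⟩ := aux_inter n Gf hGc _ _ (filter_subset _ _) (filter_subset _ _)
      (hmemD d1 h1) (hmemD d2 h2)
    obtain ⟨hγ1, hγ2⟩ := mem_inter.1 hγ
    obtain ⟨hγG, hγd1⟩ := mem_filter.1 hγ1
    obtain ⟨-, hγd2⟩ := mem_filter.1 hγ2
    have he : d1 - d2 = (γ + d1) - (γ + d2) := by abel
    rw [he]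
    exact Finset.mem_image₂.2 ⟨_, hγd1, _, hγd2, rfl⟩
  have hED : ∀ e1 ∈ Ef, ∀ e2 ∈ Ef, e1 - e2 ∈ Df := by
    intro e1 h1 e2 h2
    obtain ⟨c, hc⟩ := aux_inter n Bf hBc _ _ (filter_subset _ _) (filter_subset _ _)
      (hmemE e1 h1) (hmemE e2 h2)
    obtain ⟨hc1, hc2⟩ := mem_inter.1 hc
    obtain ⟨hcB, hce1⟩ := mem_filter.1 hc1
    obtain ⟨-, hce2⟩ := mem_filter.1 hc2
    have he : e1 - e2 = (c + e1) - (c + e2) := by abel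
    rw [he]
    exact Finset.mem_image₂.2 ⟨_, hce1, _, hce2, rfl⟩
  obtain ⟨b₀, hb₀⟩ : Bf.Nonempty := by rw [← card_pos, hBc]; exact hn
  obtain ⟨g₀, hg₀⟩ : Gf.Nonempty := by rw [← card_pos, hGc]; exact hn
  have h0D : (0 : F) ∈ Df := Finset.mem_image₂.2 ⟨b₀, hb₀, b₀, hb₀, sub_self b₀⟩
  have h0E : (0 : F) ∈ Ef := Finset.mem_image₂.2 ⟨g₀, hg₀, g₀, hg₀, sub_self g₀⟩
  have hDsubE : ∀ d ∈ Df, d ∈ Ef := fun d hd => by simpa using hDE d hd 0 h0D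
  have hEsubD : ∀ e ∈ Ef, e ∈ Df := fun e he => by simpa using hED e he 0 h0E
  have hsubD : ∀ d1 ∈ Df, ∀ d2 ∈ Df, d1 - d2 ∈ Df :=
    fun d1 h1 d2 h2 => hEsubD _ (hDE d1 h1 d2 h2)
  -- double counting: Df.card < 2 * n
  have hsum : ∑ d ∈ Df, (Gf.filter (fun γ => γ + d ∈ Gf)).card ≤ n * n := by
    have heq : ∀ d ∈ Df, (Gf.filter (fun γ => γ + d ∈ Gf)).card
        = ((Gf.filter (fun γ => γ + d ∈ Gf)).image (fun γ => (γ, γ + d))).card := by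
      intro d _
      rw [card_image_of_injOn]
      intro x _ y _ h
      exact (Prod.ext_iff.1 h).1
    rw [Finset.sum_congr rfl heq, ← Finset.card_biUnion]
    · have hss : (Df.biUnion fun d => (Gf.filter (fun γ => γ + d ∈ Gf)).image
          (fun γ => (γ, γ + d))) ⊆ Gf ×ˢ Gf := by
        intro p hp
        obtain ⟨d, hd, hp⟩ := Finset.mem_biUnion.1 hp
        obtain ⟨γ, hγ, rfl⟩ := mem_image.1 hp
        obtain ⟨hγG, hγd⟩ := mem_filter.1 hγ
        exact Finset.mem_product.2 ⟨hγG, hγd⟩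
      calc _ ≤ (Gf ×ˢ Gf).card := card_le_card hss
        _ = n * n := by rw [Finset.card_product, hGc]
    · intro d1 h1 d2 h2 hne
      rw [Function.onFun, Finset.disjoint_left]
      intro p hp1 hp2
      obtain ⟨γ, hγ, rfl⟩ := mem_image.1 hp1
      obtain ⟨γ', hγ', hpe⟩ := mem_image.1 hp2
      apply hne
      have h1 : γ' = γ := (Prod.ext_iff.1 hpe).1
      have h2 : γ' + d2 = γ + d1 := (Prod.ext_iff.1 hpe).2
      rw [h1] at h2
      exact (add_left_cancel h2).symm
  have hlow : Df.card * n < 2 * ∑ d ∈ Df, (Gf.filter (fun γ => γ + d ∈ Gf)).card := by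
    have h := Finset.sum_lt_sum_of_nonempty ⟨0, h0D⟩
      (fun d hd => hmemD d hd)
    simpa [Finset.sum_const, smul_eq_mul, Finset.mul_sum, mul_comm] using h
  have hDlt : Df.card < 2 * n := by
    have h1 : Df.card * n < (2 * n) * n := by
      calc Df.card * n < 2 * ∑ d ∈ Df, (Gf.filter (fun γ => γ + d ∈ Gf)).card := hlow
        _ ≤ 2 * (n * n) := by omega
        _ = (2 * n) * n := by ring
    exact Nat.lt_of_mul_lt_mul_right h1
  -- the coset b₀ + g₀ + Df is contained in Sf
  have hcoset : ∀ d ∈ Df, b₀ + g₀ + d ∈ Sf := by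
    intro d hd
    set A1 := Bf.image (fun b => b - b₀) with hA1def
    set A2 := Gf.image (fun g => d + g₀ - g) with hA2def
    have hA1c : A1.card = n := by
      rw [hA1def, card_image_of_injective _ (fun x y h => by simpa using congrArg (· + b₀) h), hBc]
    have hA2c : A2.card = n := by
      rw [hA2def, card_image_of_injective _ (fun x y h => sub_right_injective h), hGc]
    have hA1D : A1 ⊆ Df := by
      intro x hx
      obtain ⟨b, hb, rfl⟩ := mem_image.1 hx
      exact Finset.mem_image₂.2 ⟨b, hb, b₀, hb₀, rfl⟩
    have hA2D : A2 ⊆ Df := by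
      intro x hx
      obtain ⟨g, hg, rfl⟩ := mem_image.1 hx
      have h1 : g - g₀ ∈ Ef := Finset.mem_image₂.2 ⟨g, hg, g₀, hg₀, rfl⟩
      have heq : d + g₀ - g = d - (g - g₀) := by abel
      rw [heq]
      exact hED d (hDsubE d hd) _ h1
    have hne : (A1 ∩ A2).Nonempty := by
      rw [← card_pos]
      have h := card_union_add_card_inter A1 A2
      have hle : (A1 ∪ A2).card ≤ Df.card := card_le_card (union_subset hA1D hA2D)
      omega
    obtain ⟨x, hx⟩ := hne
    obtain ⟨hx1, hx2⟩ := mem_inter.1 hx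
    obtain ⟨b, hb, hbe⟩ := mem_image.1 hx1
    obtain ⟨g, hg, hge⟩ := mem_image.1 hx2
    have hkey : b₀ + g₀ + d = b + g := by
      have h1 : b - b₀ = d + g₀ - g := by rw [hbe, hge]
      have h2 := congrArg (fun z => z + (b₀ + g)) h1
      calc b₀ + g₀ + d = (d + g₀ - g) + (b₀ + g) := by abel
        _ = (b - b₀) + (b₀ + g) := by rw [h1]
        _ = b + g := by abel
    rw [hkey]
    exact hmemS b hb g hg
  have hDS : Df.card ≤ Sf.card := by
    apply card_le_card_of_injOn (fun d => b₀ + g₀ + d) hcoset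
    intro x _ y _ h
    exact add_left_cancel h
  -- assemble the subgroup
  refine ⟨{ carrier := (Df : Set F)
            zero_mem' := by exact_mod_cast h0D
            add_mem' := ?_
            neg_mem' := ?_ }, ?_, ?_, ?_⟩
  · intro a b ha hb
    have hnb : (0 : F) - b ∈ Df := hsubD 0 h0D b (by exact_mod_cast hb)
    have h := hsubD a (by exact_mod_cast ha) _ hnb
    have he : a - (0 - b) = a + b := by abel
    rw [he] at h
    exact_mod_cast h
  · intro a ha
    have h := hsubD 0 h0D a (by exact_mod_cast ha)
    rw [zero_sub] at h
    exact_mod_cast h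
  · rw [show ((_ : AddSubgroup F) : Set F) = (Df : Set F) from rfl, Set.ncard_coe_finset]
    exact hDS.trans hSR
  · refine ⟨b₀, fun b hbB => ?_⟩
    have hb : b ∈ Bf := hfinB.mem_toFinset.2 hbB
    have hd : b - b₀ ∈ Df := Finset.mem_image₂.2 ⟨b, hb, b₀, hb₀, rfl⟩
    have he : b = b₀ + (b - b₀) := by abel
    rw [he]
    exact Set.add_mem_add (Set.mem_singleton b₀) (by exact_mod_cast hd)
  · refine ⟨g₀, fun g hgG => ?_⟩
    have hg : g ∈ Gf := hfinG.mem_toFinset.2 hgG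
    have hd : g - g₀ ∈ Ef := Finset.mem_image₂.2 ⟨g, hg, g₀, hg₀, rfl⟩
    have he : g = g₀ + (g - g₀) := by abel
    rw [he]
    exact Set.add_mem_add (Set.mem_singleton g₀) (by exact_mod_cast hEsubD _ hd)
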